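/- Let d ≥ 1 be an integer, α ∈ (0,1), and 0 < m < min{1, 2α}. For x, y ∈ ℝ^d set Φ_x(y) := (1 + |x+y|²)^{m/2} + (1 + |x−y|²)^{m/2} − 2(1 + |x|²)^{m/2}. Then there exists a constant C > 0 such that for every x ∈ ℝ^d, the function y ↦ Φ_x(y)/|y|^{d+2α} is Lebesgue integrable on ℝ^d and |∫_{ℝ^d} Φ_x(y) |y|^{−d−2α} dy| ≤ C (1 + |x|²)^{m/2}. -/

import Mathlib

open MeasureTheory Set Real Module Metric

set_option maxHeartbeats 1000000
section All

section OneD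
variable {m : ℝ}

private lemma phi_deriv (hm : 0 < m) (t : ℝ) :
    HasDerivAt (fun t : ℝ => (1 + t ^ 2) ^ (m / 2)) (m * t * (1 + t ^ 2) ^ (m / 2 - 1)) t := by
  have h1 : (0:ℝ) < 1 + t ^ 2 := by positivity
  have h : HasDerivAt (fun t : ℝ => 1 + t ^ 2) (2 * t) t := by
    simpa using ((hasDerivAt_pow 2 t).const_add 1)
  have := h.rpow_const (p := m / 2) (Or.inl h1.ne')
  convert this using 1
  ring

private lemma phid_deriv (hm : 0 < m) (t : ℝ) :
    HasDerivAt (fun t : ℝ => m * t * (1 + t ^ 2) ^ (m / 2 - 1))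
      (m * (1 + t ^ 2) ^ (m / 2 - 1)
        + m * t * (2 * t * (m / 2 - 1) * (1 + t ^ 2) ^ (m / 2 - 2)) ) t := by
  have h1 : (0:ℝ) < 1 + t ^ 2 := by positivity
  have h : HasDerivAt (fun t : ℝ => 1 + t ^ 2) (2 * t) t := by
    simpa using ((hasDerivAt_pow 2 t).const_add 1)
  have h2 := h.rpow_const (p := m / 2 - 1) (Or.inl h1.ne')
  have h3 : HasDerivAt (fun t : ℝ => m * t) m t := by
    simpa using (hasDerivAt_id t).const_mul m
  have := h3.mul h2
  refine this.congr_deriv ?_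
  ring_nf

private lemma phidd_bound (hm : 0 < m) (hm1 : m ≤ 1) (t : ℝ) :
    |m * (1 + t ^ 2) ^ (m / 2 - 1)
        + m * t * (2 * t * (m / 2 - 1) * (1 + t ^ 2) ^ (m / 2 - 2))| ≤ 3 * m := by
  have h1 : (0:ℝ) < 1 + t ^ 2 := by positivity
  have hb1 : (1 + t ^ 2) ^ (m / 2 - 1) ≤ 1 :=
    Real.rpow_le_one_of_one_le_of_nonpos (by nlinarith) (by linarith)
  have hb0 : (0:ℝ) ≤ (1 + t ^ 2) ^ (m / 2 - 1) := Real.rpow_nonneg (by positivity) _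
  have hb2 : t ^ 2 * (1 + t ^ 2) ^ (m / 2 - 2) ≤ (1 + t ^ 2) ^ (m / 2 - 1) := by
    have : (1 + t ^ 2) ^ (m / 2 - 1) = (1 + t ^ 2) * (1 + t ^ 2) ^ (m / 2 - 2) := by
      rw [← Real.rpow_one_add' h1.le (by nlinarith)]
      ring_nf
    rw [this]
    have hb3 : (0:ℝ) ≤ (1 + t ^ 2) ^ (m / 2 - 2) := Real.rpow_nonneg (by positivity) _
    nlinarith
  have hb4 : (0:ℝ) ≤ (1 + t ^ 2) ^ (m / 2 - 2) := Real.rpow_nonneg (by positivity) _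
  have e : m * t * (2 * t * (m / 2 - 1) * (1 + t ^ 2) ^ (m / 2 - 2))
      = -(m * (2 - m) * (t ^ 2 * (1 + t ^ 2) ^ (m / 2 - 2))) := by ring
  have h5 : (0:ℝ) ≤ m * (2 - m) := by nlinarith
  have h6 : m * (2 - m) * (t ^ 2 * (1 + t ^ 2) ^ (m / 2 - 2)) ≤ m * (2 - m) * (1 + t ^ 2) ^ (m / 2 - 1) :=
    mul_le_mul_of_nonneg_left hb2 h5
  have h7 : m * (2 - m) * (1 + t ^ 2) ^ (m / 2 - 1) ≤ m * (2 - m) * 1 :=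
    mul_le_mul_of_nonneg_left hb1 h5
  have h8 : (0:ℝ) ≤ m * (2 - m) * (t ^ 2 * (1 + t ^ 2) ^ (m / 2 - 2)) :=
    mul_nonneg h5 (mul_nonneg (sq_nonneg t) hb4)
  have h9 : m * (1 + t ^ 2) ^ (m / 2 - 1) ≤ m * 1 := mul_le_mul_of_nonneg_left hb1 hm.le
  have h10 : (0:ℝ) ≤ m * (1 + t ^ 2) ^ (m / 2 - 1) := mul_nonneg hm.le hb0
  rw [e, abs_le]
  constructor <;> nlinarith

/-- second difference bound for φ(t) = (1+t²)^{m/2} -/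
private lemma phi_second_diff (hm : 0 < m) (hm1 : m ≤ 1) (a r : ℝ) :
    |(1 + (a + r) ^ 2) ^ (m / 2) + (1 + (a - r) ^ 2) ^ (m / 2) - 2 * (1 + a ^ 2) ^ (m / 2)|
      ≤ 6 * m * r ^ 2 := by
  set φ : ℝ → ℝ := fun t => (1 + t ^ 2) ^ (m / 2) with hφ
  set φd : ℝ → ℝ := fun t => m * t * (1 + t ^ 2) ^ (m / 2 - 1) with hφd
  -- φd is Lipschitz with constant 3m
  have hlip : ∀ s t : ℝ, |φd s - φd t| ≤ 3 * m * |s - t| := by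
    intro s t
    have := Convex.norm_image_sub_le_of_norm_hasDerivWithin_le
      (f := φd)
      (f' := fun t => m * (1 + t ^ 2) ^ (m / 2 - 1)
        + m * t * (2 * t * (m / 2 - 1) * (1 + t ^ 2) ^ (m / 2 - 2)))
      (C := 3 * m) (s := univ)
      (fun x _ => (phid_deriv hm x).hasDerivWithinAt)
      (fun x _ => by simpa using phidd_bound hm hm1 x)
      convex_univ (mem_univ t) (mem_univ s)
    simpa [Real.norm_eq_abs] using this
  have key : ∀ r' : ℝ, |r'| ≤ |r| → |φ (a + r') - φ a - φd a * r'| ≤ 3 * m * r ^ 2 := by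
    intro r' hr'
    have hseg : ∀ x ∈ uIcc a (a + r'), |x - a| ≤ |r| := by
      intro x hx
      rw [Set.uIcc_eq_union] at hx
      rcases hx with hx | hx
      · have := hx.1; have := hx.2
        rw [abs_le]; constructor <;> [nlinarith [abs_nonneg r, le_abs_self r', neg_abs_le r', hr'.trans_eq rfl]; skip]
        · nlinarith [le_abs_self r', hr']
      · have := hx.1; have := hx.2
        rw [abs_le]; constructor
        · nlinarith [neg_abs_le r', hr']
        · nlinarith [le_abs_self r', neg_abs_le r', hr']
    have := Convex.norm_image_sub_le_of_norm_hasDerivWithin_le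
      (f := fun t => φ t - φd a * t)
      (f' := fun t => φd t - φd a)
      (C := 3 * m * |r|) (s := uIcc a (a + r'))
      (fun x _ => ((phi_deriv hm x).sub ((hasDerivAt_id x).const_mul (φd a))).hasDerivWithinAt.congr_deriv (by ring))
      (fun x hx => by
        have h1 := hlip x a
        have h2 := hseg x hx
        have : |φd x - φd a| ≤ 3 * m * |r| := by
          refine h1.trans ?_
          have : (0:ℝ) ≤ 3 * m := by linarith
          exact mul_le_mul_of_nonneg_left h2 this
        simpa [Real.norm_eq_abs] using this)
      (convex_uIcc _ _) (left_mem_uIcc) (right_mem_uIcc)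
    have habs : |r'| * |r| ≤ r ^ 2 := by
      have := abs_nonneg r
      nlinarith [sq_abs r]
    calc |φ (a + r') - φ a - φd a * r'|
        = |(φ (a + r') - φd a * (a + r')) - (φ a - φd a * a)| := by ring_nf
      _ ≤ 3 * m * |r| * |a + r' - a| := by simpa [Real.norm_eq_abs] using this
      _ = 3 * m * (|r'| * |r|) := by rw [add_sub_cancel_left]; ring
      _ ≤ 3 * m * r ^ 2 := by nlinarith
  have k1 := key r (le_refl _)
  have k2 := key (-r) (by simp)
  have : |(φ (a + r) - φ a - φd a * r) + (φ (a + -r) - φ a - φd a * (-r))| ≤ 6 * m * r ^ 2 := by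
    calc _ ≤ |φ (a + r) - φ a - φd a * r| + |φ (a + -r) - φ a - φd a * (-r)| := abs_add_le _ _
      _ ≤ 3 * m * r ^ 2 + 3 * m * r ^ 2 := add_le_add k1 k2
      _ = 6 * m * r ^ 2 := by ring
  have heq : (φ (a + r) - φ a - φd a * r) + (φ (a + -r) - φ a - φd a * (-r))
      = φ (a + r) + φ (a - r) - 2 * φ a := by
    have : a + -r = a - r := by ring
    rw [this]; ring
  rw [heq] at this
  simpa [hφ] using this

end OneD

section TwoD
variable {m : ℝ}

private lemma f_concave (hm : 0 < m) (hm1 : m ≤ 1) :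
    ConcaveOn ℝ (Ici (0:ℝ)) (fun t : ℝ => (1 + t) ^ (m / 2)) := by
  have hc := Real.concaveOn_rpow (p := m / 2) (by linarith) (by linarith)
  refine ⟨convex_Ici _, fun x hx y hy a b ha hb hab => ?_⟩
  have h1 : (1:ℝ) + x ∈ Ici (0:ℝ) := by simp only [mem_Ici] at hx ⊢; linarith
  have h2 : (1:ℝ) + y ∈ Ici (0:ℝ) := by simp only [mem_Ici] at hy ⊢; linarith
  have := hc.2 h1 h2 ha hb hab
  have he : a • ((1:ℝ) + x) + b • ((1:ℝ) + y) = 1 + (a • x + b • y) := by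
    simp only [smul_eq_mul]; nlinarith
  rw [he] at this
  simpa using this

private lemma spread {g : ℝ → ℝ} (hg : ConcaveOn ℝ (Ici (0:ℝ)) g) {c p P : ℝ}
    (hp : |p| ≤ P) (hcP : 0 ≤ c - P) :
    g (c + P) + g (c - P) ≤ g (c + p) + g (c - p) := by
  rcases eq_or_lt_of_le ((abs_nonneg p).trans hp) with h0 | hP
  · have hp0 : p = 0 := by
      have : |p| = 0 := le_antisymm (hp.trans h0.symm.le) (abs_nonneg p)
      exact abs_eq_zero.mp this
    subst hp0
    rw [← h0]
  · set a := (P + p) / (2 * P) with ha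
    set b := (P - p) / (2 * P) with hb
    have hpl := neg_abs_le p
    have hpu := le_abs_self p
    have ha0 : 0 ≤ a := by apply div_nonneg <;> nlinarith
    have hb0 : 0 ≤ b := by apply div_nonneg <;> nlinarith
    have hab : a + b = 1 := by
      rw [ha, hb, ← add_div, div_eq_one_iff_eq (by positivity)]; ring
    have hmemP : c + P ∈ Ici (0:ℝ) := by simp only [mem_Ici]; nlinarith
    have hmemM : c - P ∈ Ici (0:ℝ) := hcP
    have k1 := hg.2 hmemP hmemM ha0 hb0 hab
    have k2 := hg.2 hmemP hmemM hb0 ha0 (by linarith)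
    have e1 : a • (c + P) + b • (c - P) = c + p := by
      simp only [smul_eq_mul, ha, hb]; field_simp; ring
    have e2 : b • (c + P) + a • (c - P) = c - p := by
      simp only [smul_eq_mul, ha, hb]; field_simp; ring
    rw [e1] at k1; rw [e2] at k2
    have : (a + b) * g (c + P) + (a + b) * g (c - P) ≤ g (c + p) + g (c - p) := by
      simp only [smul_eq_mul] at k1 k2; nlinarith
    rw [hab] at this; simpa using this

/-- f is (m/2)-Lipschitz upper bound : f(s+h) - f(s) ≤ (m/2) h for s,h ≥ 0 -/
private lemma f_lip (hm : 0 < m) (hm1 : m ≤ 1) {s h : ℝ} (hs : 0 ≤ s) (hh : 0 ≤ h) :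
    (1 + (s + h)) ^ (m / 2) - (1 + s) ^ (m / 2) ≤ m / 2 * h := by
  have hder : ∀ t ∈ Icc s (s + h), HasDerivWithinAt (fun t : ℝ => (1 + t) ^ (m / 2))
      (m / 2 * (1 + t) ^ (m / 2 - 1)) (Icc s (s + h)) t := by
    intro t ht
    have h1 : (0:ℝ) < 1 + t := by have := ht.1; linarith
    have hD : HasDerivAt (fun t : ℝ => 1 + t) 1 t := by simpa using (hasDerivAt_id t).const_add 1
    have := hD.rpow_const (p := m / 2) (Or.inl h1.ne')
    exact (this.congr_deriv (by ring)).hasDerivWithinAt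
  have hbd : ∀ t ∈ Icc s (s + h), ‖m / 2 * (1 + t) ^ (m / 2 - 1)‖ ≤ m / 2 := by
    intro t ht
    have h1 : (1:ℝ) ≤ 1 + t := by have := ht.1; linarith
    have hb1 : (1 + t) ^ (m / 2 - 1) ≤ 1 :=
      Real.rpow_le_one_of_one_le_of_nonpos h1 (by linarith)
    have hb0 : (0:ℝ) ≤ (1 + t) ^ (m / 2 - 1) := Real.rpow_nonneg (by linarith) _
    rw [Real.norm_eq_abs, abs_of_nonneg (by positivity)]
    nlinarith
  have := Convex.norm_image_sub_le_of_norm_hasDerivWithin_le hder hbd (convex_Icc _ _)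
    (left_mem_Icc.mpr (by linarith)) (right_mem_Icc.mpr (by linarith))
  rw [Real.norm_eq_abs, Real.norm_eq_abs] at this
  have h2 : |s + h - s| = h := by rw [add_sub_cancel_left, abs_of_nonneg hh]
  rw [h2] at this
  calc (1 + (s + h)) ^ (m / 2) - (1 + s) ^ (m / 2)
      ≤ |(1 + (s + h)) ^ (m / 2) - (1 + s) ^ (m / 2)| := le_abs_self _
    _ ≤ m / 2 * h := this

end TwoD

section Claims
variable {m : ℝ} {d : ℕ}

private lemma claimA (hm : 0 < m) (hm1 : m ≤ 1) (x y : EuclideanSpace ℝ (Fin d)) :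
    |(1 + ‖x + y‖ ^ 2) ^ (m / 2) + (1 + ‖x - y‖ ^ 2) ^ (m / 2)
      - 2 * (1 + ‖x‖ ^ 2) ^ (m / 2)| ≤ 6 * m * ‖y‖ ^ 2 := by
  set s : ℝ := ‖x‖ ^ 2 with hs
  set r : ℝ := ‖y‖ with hr
  set p : ℝ := 2 * (inner ℝ x y : ℝ) with hp
  set c : ℝ := s + r ^ 2 with hc
  set P : ℝ := 2 * ‖x‖ * r with hP
  have hu : ‖x + y‖ ^ 2 = c + p := by rw [norm_add_sq_real]; simp only [hc, hp, hs, hr]; ring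
  have hv : ‖x - y‖ ^ 2 = c - p := by rw [norm_sub_sq_real]; simp only [hc, hp, hs, hr]; ring
  have hpP : |p| ≤ P := by
    rw [hp, hP, abs_mul, abs_two]
    have := abs_real_inner_le_norm x y
    have h2 : (0:ℝ) ≤ 2 := by norm_num
    rw [mul_assoc]
    exact mul_le_mul_of_nonneg_left this h2
  have hcP : (0:ℝ) ≤ c - P := by
    have := sq_nonneg (‖x‖ - r)
    simp only [hc, hP, hs]
    nlinarith
  set f : ℝ → ℝ := fun t => (1 + t) ^ (m / 2) with hf
  have hconc := f_concave hm hm1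
  -- upper bound
  have hup : f (c + p) + f (c - p) ≤ 2 * f c := by
    have h0 : |(0:ℝ)| ≤ |p| := by simp
    have hc0 : (0:ℝ) ≤ c - |p| := by
      have : |p| ≤ P := hpP
      linarith
    have := spread hconc h0 hc0
    simp only [add_zero, sub_zero] at this
    rcases abs_cases p with ⟨he, _⟩ | ⟨he, _⟩
    · rw [he] at this; linarith
    · rw [he] at this
      have e1 : c + -p = c - p := by ring
      have e2 : c - -p = c + p := by ring
      rw [e1, e2] at this; linarith
  have hfc : 2 * f c - 2 * f s ≤ m * r ^ 2 := by
    have := f_lip hm hm1 (s := s) (h := r ^ 2) (by positivity) (by positivity)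
    simp only [hf, hc]
    nlinarith
  -- lower bound
  have hlow : 2 * f s - 6 * m * r ^ 2 ≤ f (c + p) + f (c - p) := by
    have hsp := spread hconc hpP hcP
    have e1 : c + P = (‖x‖ + r) ^ 2 := by simp only [hc, hP, hs]; ring
    have e2 : c - P = (‖x‖ - r) ^ 2 := by simp only [hc, hP, hs]; ring
    have hsd := phi_second_diff hm hm1 ‖x‖ r
    have : f (c + P) + f (c - P)
        = (1 + (‖x‖ + r) ^ 2) ^ (m / 2) + (1 + (‖x‖ - r) ^ 2) ^ (m / 2) := by
      rw [hf]; simp only [e1, e2]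
    rw [abs_le] at hsd
    have h2 : f s = (1 + ‖x‖ ^ 2) ^ (m / 2) := by rw [hf]
    nlinarith [hsd.1]
  rw [hu, hv, abs_le]
  constructor
  · show -(6 * m * r ^ 2) ≤ f (c + p) + f (c - p) - 2 * f s
    nlinarith
  · show f (c + p) + f (c - p) - 2 * f s ≤ 6 * m * r ^ 2
    nlinarith

private lemma claimB (hm : 0 < m) (hm1 : m ≤ 1) (x y : EuclideanSpace ℝ (Fin d))
    (hy : 1 ≤ ‖y‖) :
    |(1 + ‖x + y‖ ^ 2) ^ (m / 2) + (1 + ‖x - y‖ ^ 2) ^ (m / 2)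
      - 2 * (1 + ‖x‖ ^ 2) ^ (m / 2)| ≤ 10 * (1 + ‖x‖ ^ 2) ^ (m / 2) * ‖y‖ ^ m := by
  have hr1 : (1:ℝ) ≤ ‖y‖ ^ 2 := by nlinarith
  have key : ∀ z : EuclideanSpace ℝ (Fin d), ‖z‖ ^ 2 ≤ 2 * ‖x‖ ^ 2 + 2 * ‖y‖ ^ 2 →
      (1 + ‖z‖ ^ 2) ^ (m / 2) ≤ 4 * (1 + ‖x‖ ^ 2) ^ (m / 2) * ‖y‖ ^ m := by
    intro z hz
    have h1 : 1 + ‖z‖ ^ 2 ≤ 4 * ((1 + ‖x‖ ^ 2) * ‖y‖ ^ 2) := by nlinarith [sq_nonneg ‖x‖]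
    have h2 : (1 + ‖z‖ ^ 2) ^ (m / 2) ≤ (4 * ((1 + ‖x‖ ^ 2) * ‖y‖ ^ 2)) ^ (m / 2) :=
      Real.rpow_le_rpow (by positivity) h1 (by positivity)
    have h3 : (4 * ((1 + ‖x‖ ^ 2) * ‖y‖ ^ 2)) ^ (m / 2)
        = (4:ℝ) ^ (m / 2) * ((1 + ‖x‖ ^ 2) ^ (m / 2) * (‖y‖ ^ 2) ^ (m / 2)) := by
      rw [Real.mul_rpow (by norm_num) (by positivity),
        Real.mul_rpow (by positivity) (by positivity)]
    have h4 : ((‖y‖:ℝ) ^ 2) ^ (m / 2) = ‖y‖ ^ m := by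
      rw [← Real.rpow_natCast ‖y‖ 2, ← Real.rpow_mul (norm_nonneg y)]
      congr 1
      push_cast
      ring
    have h5 : (4:ℝ) ^ (m / 2) ≤ 4 := by
      calc (4:ℝ) ^ (m / 2) ≤ (4:ℝ) ^ (1:ℝ) :=
        Real.rpow_le_rpow_of_exponent_le (by norm_num) (by linarith)
      _ = 4 := Real.rpow_one 4
    have h6 : (0:ℝ) ≤ (1 + ‖x‖ ^ 2) ^ (m / 2) * ‖y‖ ^ m := by positivity
    calc (1 + ‖z‖ ^ 2) ^ (m / 2) ≤ (4:ℝ) ^ (m / 2) * ((1 + ‖x‖ ^ 2) ^ (m / 2) * (‖y‖ ^ 2) ^ (m / 2)) := by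
          rw [← h3]; exact h2
      _ = (4:ℝ) ^ (m / 2) * ((1 + ‖x‖ ^ 2) ^ (m / 2) * ‖y‖ ^ m) := by rw [h4]
      _ ≤ 4 * ((1 + ‖x‖ ^ 2) ^ (m / 2) * ‖y‖ ^ m) := mul_le_mul_of_nonneg_right h5 h6
      _ = 4 * (1 + ‖x‖ ^ 2) ^ (m / 2) * ‖y‖ ^ m := by ring
  have hsq : ∀ z : EuclideanSpace ℝ (Fin d), ‖z‖ ≤ ‖x‖ + ‖y‖ →
      ‖z‖ ^ 2 ≤ 2 * ‖x‖ ^ 2 + 2 * ‖y‖ ^ 2 := by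
    intro z hz
    have h0 : (0:ℝ) ≤ ‖z‖ := norm_nonneg z
    have h1 : (0:ℝ) ≤ ‖x‖ + ‖y‖ := by positivity
    nlinarith [sq_nonneg (‖x‖ - ‖y‖)]
  have hu := key (x + y) (hsq _ (norm_add_le x y))
  have hv := key (x - y) (hsq _ (norm_sub_le x y))
  have hym : (1:ℝ) ≤ ‖y‖ ^ m := Real.one_le_rpow hy hm.le
  have hw0 : (0:ℝ) < (1 + ‖x‖ ^ 2) ^ (m / 2) := Real.rpow_pos_of_pos (by positivity) _
  have habs : ∀ a b c : ℝ, 0 ≤ a → 0 ≤ b → 0 ≤ c → |a + b - 2 * c| ≤ a + b + 2 * c := by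
    intro a b c ha hb hc
    rw [abs_le]; constructor <;> linarith
  have h0u : (0:ℝ) ≤ (1 + ‖x + y‖ ^ 2) ^ (m / 2) := Real.rpow_nonneg (by positivity) _
  have h0v : (0:ℝ) ≤ (1 + ‖x - y‖ ^ 2) ^ (m / 2) := Real.rpow_nonneg (by positivity) _
  calc |(1 + ‖x + y‖ ^ 2) ^ (m / 2) + (1 + ‖x - y‖ ^ 2) ^ (m / 2) - 2 * (1 + ‖x‖ ^ 2) ^ (m / 2)|
      ≤ (1 + ‖x + y‖ ^ 2) ^ (m / 2) + (1 + ‖x - y‖ ^ 2) ^ (m / 2) + 2 * (1 + ‖x‖ ^ 2) ^ (m / 2) :=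
        habs _ _ _ h0u h0v hw0.le
    _ ≤ 4 * (1 + ‖x‖ ^ 2) ^ (m / 2) * ‖y‖ ^ m + 4 * (1 + ‖x‖ ^ 2) ^ (m / 2) * ‖y‖ ^ m
        + 2 * (1 + ‖x‖ ^ 2) ^ (m / 2) * ‖y‖ ^ m := by
        have h2 : 2 * (1 + ‖x‖ ^ 2) ^ (m / 2) ≤ 2 * (1 + ‖x‖ ^ 2) ^ (m / 2) * ‖y‖ ^ m := by
          nlinarith
        linarith
    _ = 10 * (1 + ‖x‖ ^ 2) ^ (m / 2) * ‖y‖ ^ m := by ring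

end Claims

private lemma intOuter {d : ℕ} (hd : 1 ≤ d) {q : ℝ} (hq : q < -(d:ℝ)) :
    IntegrableOn (fun y : EuclideanSpace ℝ (Fin d) => ‖y‖ ^ q) (Metric.ball 0 1)ᶜ volume := by
  have hfr : (finrank ℝ (EuclideanSpace ℝ (Fin d)) : ℝ) = (d:ℝ) := by
    rw [finrank_euclideanSpace_fin]
  have hint : Integrable (fun y : EuclideanSpace ℝ (Fin d) => (2:ℝ) ^ (-q) * (1 + ‖y‖) ^ (-(-q)))
      volume := by
    refine (integrable_one_add_norm ?_).const_mul _
    rw [hfr]; linarith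
  refine Integrable.mono' hint.integrableOn ?_ ?_
  · apply Measurable.aestronglyMeasurable
    fun_prop
  · rw [ae_restrict_iff' isOpen_ball.measurableSet.compl]
    refine Filter.Eventually.of_forall fun y hy => ?_
    have hy1 : (1:ℝ) ≤ ‖y‖ := by
      simp only [mem_compl_iff, mem_ball, dist_zero_right, not_lt] at hy
      exact hy
    have hy0 : (0:ℝ) < ‖y‖ := by linarith
    rw [Real.norm_eq_abs, abs_of_nonneg (Real.rpow_nonneg (norm_nonneg y) q), neg_neg]
    have h1 : (1 + ‖y‖) ^ q ≥ (2 * ‖y‖) ^ q := by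
      apply Real.rpow_le_rpow_of_nonpos (by linarith) (by linarith) (by linarith)
    have h2 : (2 * ‖y‖) ^ q = (2:ℝ) ^ q * ‖y‖ ^ q := Real.mul_rpow (by norm_num) (norm_nonneg y)
    have h3 : (2:ℝ) ^ (-q) * ((2:ℝ) ^ q * ‖y‖ ^ q) = ‖y‖ ^ q := by
      rw [← mul_assoc, ← Real.rpow_add (by norm_num)]
      simp
    calc ‖y‖ ^ q = (2:ℝ) ^ (-q) * ((2:ℝ) ^ q * ‖y‖ ^ q) := h3.symm
      _ = (2:ℝ) ^ (-q) * (2 * ‖y‖) ^ q := by rw [h2]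
      _ ≤ (2:ℝ) ^ (-q) * (1 + ‖y‖) ^ q := by
          have : (0:ℝ) ≤ (2:ℝ) ^ (-q) := Real.rpow_nonneg (by norm_num) _
          exact mul_le_mul_of_nonneg_left h1 this

private lemma intInner {d : ℕ} (hd : 1 ≤ d) {q : ℝ} (hq : -(d:ℝ) < q) :
    IntegrableOn (fun y : EuclideanSpace ℝ (Fin d) => ‖y‖ ^ q) (Metric.ball 0 1) volume := by
  have hfr : (finrank ℝ (EuclideanSpace ℝ (Fin d)) : ℝ) = (d:ℝ) := by
    rw [finrank_euclideanSpace_fin]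
  have hmeas : Measurable (fun y : EuclideanSpace ℝ (Fin d) => ‖y‖ ^ q) := by fun_prop
  rcases le_or_gt 0 q with hq0 | hq0
  · -- bounded case
    refine Integrable.mono' (g := fun _ => (1:ℝ)) ?_ hmeas.aestronglyMeasurable ?_
    · exact integrableOn_const measure_ball_lt_top.ne
    · rw [ae_restrict_iff' isOpen_ball.measurableSet]
      refine Filter.Eventually.of_forall fun y hy => ?_
      have hy1 : ‖y‖ ≤ 1 := by
        simp only [mem_ball, dist_zero_right] at hy
        exact hy.le
      rw [Real.norm_eq_abs, abs_of_nonneg (Real.rpow_nonneg (norm_nonneg y) q)]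
      exact Real.rpow_le_one (norm_nonneg y) hy1 hq0
  · -- layer cake case
    have hqne : q ≠ 0 := hq0.ne
    constructor
    · exact hmeas.aestronglyMeasurable
    · rw [HasFiniteIntegral]
      have hnn : ∀ y : EuclideanSpace ℝ (Fin d), 0 ≤ ‖y‖ ^ q :=
        fun y => Real.rpow_nonneg (norm_nonneg y) q
      have : (∫⁻ y in Metric.ball (0:EuclideanSpace ℝ (Fin d)) 1, ‖‖y‖ ^ q‖ₑ)
          = ∫⁻ y in Metric.ball (0:EuclideanSpace ℝ (Fin d)) 1, ENNReal.ofReal (‖y‖ ^ q) :=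
        lintegral_enorm_of_nonneg fun y => hnn y
      rw [this, lintegral_eq_lintegral_meas_le _ (Filter.Eventually.of_forall hnn)
        hmeas.aemeasurable]
      set μr := volume.restrict (Metric.ball (0:EuclideanSpace ℝ (Fin d)) 1) with hμr
      set mB := volume (Metric.ball (0:EuclideanSpace ℝ (Fin d)) 1) with hmB
      have hmBlt : mB < ⊤ := measure_ball_lt_top
      calc ∫⁻ t in Ioi 0, μr {a | t ≤ ‖a‖ ^ q}
          ≤ ∫⁻ t in Ioc 0 1 ∪ Ioi 1, μr {a | t ≤ ‖a‖ ^ q} :=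
            lintegral_mono_set Ioi_subset_Ioc_union_Ioi
        _ ≤ (∫⁻ t in Ioc 0 1, μr {a | t ≤ ‖a‖ ^ q}) + ∫⁻ t in Ioi 1, μr {a | t ≤ ‖a‖ ^ q} :=
            lintegral_union_le _ _ _
        _ < ⊤ := by
            rw [ENNReal.add_lt_top]
            constructor
            · -- t small : measure at most mB
              calc (∫⁻ t in Ioc 0 1, μr {a | t ≤ ‖a‖ ^ q})
                  ≤ ∫⁻ _ in Ioc (0:ℝ) 1, mB := by
                    refine lintegral_mono fun t => ?_
                    exact le_trans (measure_mono (subset_univ _))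
                      (by rw [hμr, Measure.restrict_apply_univ])
                _ < ⊤ := by
                    rw [setLIntegral_const]
                    refine ENNReal.mul_lt_top hmBlt ?_
                    simp [Real.volume_Ioc]
            · -- t large : measure at most volume of closedBall of radius t^(1/q)
              have hbd : ∀ t ∈ Ioi (1:ℝ), μr {a | t ≤ ‖a‖ ^ q}
                  ≤ ENNReal.ofReal ((t ^ q⁻¹) ^ d) * mB := by
                intro t ht
                have ht0 : (0:ℝ) < t := lt_trans zero_lt_one ht
                have hsub : {a : EuclideanSpace ℝ (Fin d) | t ≤ ‖a‖ ^ q}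
                    ⊆ Metric.closedBall 0 (t ^ q⁻¹) := by
                  intro a ha
                  simp only [mem_setOf_eq] at ha
                  simp only [Metric.mem_closedBall, dist_zero_right]
                  rcases eq_or_lt_of_le (norm_nonneg a) with h0 | h0
                  · rw [← h0]
                    exact Real.rpow_nonneg ht0.le _
                  · have := Real.rpow_le_rpow_of_nonpos ht0 ha
                      (by simp only [inv_nonpos]; linarith : q⁻¹ ≤ 0)
                    rwa [← Real.rpow_mul (norm_nonneg a), mul_inv_cancel₀ hqne,
                      Real.rpow_one] at this
                calc μr {a | t ≤ ‖a‖ ^ q} ≤ volume {a : EuclideanSpace ℝ (Fin d) | t ≤ ‖a‖ ^ q} := by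
                      rw [hμr]; exact Measure.restrict_apply_le _ _
                  _ ≤ volume (Metric.closedBall (0:EuclideanSpace ℝ (Fin d)) (t ^ q⁻¹)) :=
                      measure_mono hsub
                  _ = ENNReal.ofReal ((t ^ q⁻¹) ^ finrank ℝ (EuclideanSpace ℝ (Fin d))) * mB := by
                      rw [hmB]
                      exact Measure.addHaar_closedBall _ _ (Real.rpow_nonneg ht0.le _)
                  _ = ENNReal.ofReal ((t ^ q⁻¹) ^ d) * mB := by rw [finrank_euclideanSpace_fin]
              calc (∫⁻ t in Ioi 1, μr {a | t ≤ ‖a‖ ^ q})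
                  ≤ ∫⁻ t in Ioi (1:ℝ), ENNReal.ofReal ((t ^ q⁻¹) ^ d) * mB :=
                    setLIntegral_mono' measurableSet_Ioi hbd
                _ = (∫⁻ t in Ioi (1:ℝ), ENNReal.ofReal ((t ^ q⁻¹) ^ d)) * mB :=
                    lintegral_mul_const' _ _ hmBlt.ne
                _ < ⊤ := by
                    refine ENNReal.mul_lt_top ?_ hmBlt
                    have heq : ∀ t ∈ Ioi (1:ℝ), ENNReal.ofReal ((t ^ q⁻¹) ^ d)
                        = ENNReal.ofReal (t ^ ((d:ℝ) / q)) := by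
                      intro t ht
                      have ht0 : (0:ℝ) < t := lt_trans zero_lt_one ht
                      congr 1
                      rw [← Real.rpow_natCast (t ^ q⁻¹) d, ← Real.rpow_mul ht0.le]
                      congr 1
                      field_simp
                    rw [setLIntegral_congr_fun measurableSet_Ioi heq]
                    have hint2 : IntegrableOn (fun t : ℝ => t ^ ((d:ℝ) / q)) (Ioi 1) volume := by
                      refine integrableOn_Ioi_rpow_of_lt ?_ zero_lt_one
                      rw [div_lt_iff_of_neg hq0]
                      push_cast
                      linarith
                    exact hint2.setLIntegral_lt_top

theorem stmt_5 (d : ℕ) (hd : 1 ≤ d) (α : ℝ) (hα0 : 0 < α) (hα1 : α < 1)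
    (m : ℝ) (hm0 : 0 < m) (hm : m < min 1 (2 * α)) :
    ∃ C : ℝ, 0 < C ∧ ∀ x : EuclideanSpace ℝ (Fin d),
      Integrable (fun y : EuclideanSpace ℝ (Fin d) =>
        ((1 + ‖x + y‖ ^ 2) ^ (m / 2) + (1 + ‖x - y‖ ^ 2) ^ (m / 2)
          - 2 * (1 + ‖x‖ ^ 2) ^ (m / 2)) / ‖y‖ ^ ((d : ℝ) + 2 * α)) ∧
      |∫ y : EuclideanSpace ℝ (Fin d),
        ((1 + ‖x + y‖ ^ 2) ^ (m / 2) + (1 + ‖x - y‖ ^ 2) ^ (m / 2)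
          - 2 * (1 + ‖x‖ ^ 2) ^ (m / 2)) * ‖y‖ ^ (-(d : ℝ) - 2 * α)|
        ≤ C * (1 + ‖x‖ ^ 2) ^ (m / 2) := by
  have hm1 : m < 1 := lt_of_lt_of_le hm (min_le_left _ _)
  have hm2α : m < 2 * α := lt_of_lt_of_le hm (min_le_right _ _)
  have hd1 : (1:ℝ) ≤ (d:ℝ) := by exact_mod_cast hd
  set β : ℝ := -(d:ℝ) - 2 * α with hβ
  have hβ0 : β < 0 := by rw [hβ]; linarith
  set q₁ : ℝ := 2 + β with hq₁
  set q₂ : ℝ := m + β with hq₂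
  have hI1 : IntegrableOn (fun y : EuclideanSpace ℝ (Fin d) => ‖y‖ ^ q₁)
      (Metric.ball 0 1) volume := intInner hd (by rw [hq₁, hβ]; linarith)
  have hI2 : IntegrableOn (fun y : EuclideanSpace ℝ (Fin d) => ‖y‖ ^ q₂)
      (Metric.ball 0 1)ᶜ volume := intOuter hd (by rw [hq₂, hβ]; linarith)
  set J₁ : ℝ := ∫ y : EuclideanSpace ℝ (Fin d) in Metric.ball 0 1, ‖y‖ ^ q₁ with hJ₁
  set J₂ : ℝ := ∫ y : EuclideanSpace ℝ (Fin d) in (Metric.ball 0 1)ᶜ, ‖y‖ ^ q₂ with hJ₂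
  have hJ₁0 : 0 ≤ J₁ := setIntegral_nonneg isOpen_ball.measurableSet
    (fun y _ => Real.rpow_nonneg (norm_nonneg y) _)
  have hJ₂0 : 0 ≤ J₂ := setIntegral_nonneg isOpen_ball.measurableSet.compl
    (fun y _ => Real.rpow_nonneg (norm_nonneg y) _)
  refine ⟨6 * m * J₁ + 10 * J₂ + 1, by positivity, fun x => ?_⟩
  set w : ℝ := (1 + ‖x‖ ^ 2) ^ (m / 2) with hw
  have hw1 : 1 ≤ w := Real.one_le_rpow (by nlinarith [sq_nonneg ‖x‖]) (by positivity)
  have hw0 : 0 < w := lt_of_lt_of_le zero_lt_one hw1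
  set g : EuclideanSpace ℝ (Fin d) → ℝ := fun y =>
    (1 + ‖x + y‖ ^ 2) ^ (m / 2) + (1 + ‖x - y‖ ^ 2) ^ (m / 2) - 2 * (1 + ‖x‖ ^ 2) ^ (m / 2)
    with hg
  set G : EuclideanSpace ℝ (Fin d) → ℝ := fun y => g y * ‖y‖ ^ β with hG
  have hGmeas : Measurable G := by
    rw [hG, hg]
    fun_prop
  -- bound inside the ball
  have hGball : ∀ y ∈ Metric.ball (0 : EuclideanSpace ℝ (Fin d)) 1,
      ‖G y‖ ≤ 6 * m * ‖y‖ ^ q₁ := by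
    intro y _
    rcases eq_or_ne y 0 with rfl | hy0
    · rw [hG]
      simp only [norm_zero]
      rw [Real.zero_rpow hβ0.ne, mul_zero, norm_zero]
      positivity
    · have hy0' : (0:ℝ) < ‖y‖ := norm_pos_iff.mpr hy0
      rw [hG, Real.norm_eq_abs, abs_mul, abs_of_nonneg (Real.rpow_nonneg (norm_nonneg y) β)]
      have hA := claimA hm0 hm1.le x y
      have h2 : ‖y‖ ^ 2 * ‖y‖ ^ β = ‖y‖ ^ q₁ := by
        rw [← Real.rpow_natCast ‖y‖ 2, ← Real.rpow_add hy0', hq₁]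
        norm_num
      calc |g y| * ‖y‖ ^ β ≤ (6 * m * ‖y‖ ^ 2) * ‖y‖ ^ β := by
            exact mul_le_mul_of_nonneg_right hA (Real.rpow_nonneg (norm_nonneg y) β)
        _ = 6 * m * ‖y‖ ^ q₁ := by rw [mul_assoc, h2]
  -- bound outside the ball
  have hGcompl : ∀ y ∈ (Metric.ball (0 : EuclideanSpace ℝ (Fin d)) 1)ᶜ,
      ‖G y‖ ≤ 10 * w * ‖y‖ ^ q₂ := by
    intro y hy
    have hy1 : (1:ℝ) ≤ ‖y‖ := by
      simp only [mem_compl_iff, Metric.mem_ball, dist_zero_right, not_lt] at hy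
      exact hy
    have hy0' : (0:ℝ) < ‖y‖ := lt_of_lt_of_le zero_lt_one hy1
    rw [hG, Real.norm_eq_abs, abs_mul, abs_of_nonneg (Real.rpow_nonneg (norm_nonneg y) β)]
    have hB := claimB hm0 hm1.le x y hy1
    have h2 : ‖y‖ ^ m * ‖y‖ ^ β = ‖y‖ ^ q₂ := by
      rw [← Real.rpow_add hy0', hq₂]
    calc |g y| * ‖y‖ ^ β ≤ (10 * w * ‖y‖ ^ m) * ‖y‖ ^ β := by
          exact mul_le_mul_of_nonneg_right hB (Real.rpow_nonneg (norm_nonneg y) β)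
      _ = 10 * w * (‖y‖ ^ m * ‖y‖ ^ β) := by ring
      _ = 10 * w * ‖y‖ ^ q₂ := by rw [h2]
  -- integrability
  have hGint1 : IntegrableOn G (Metric.ball 0 1) volume := by
    refine Integrable.mono' (hI1.const_mul (6 * m)) hGmeas.aestronglyMeasurable ?_
    rw [ae_restrict_iff' isOpen_ball.measurableSet]
    exact Filter.Eventually.of_forall hGball
  have hGint2 : IntegrableOn G (Metric.ball 0 1)ᶜ volume := by
    refine Integrable.mono' (hI2.const_mul (10 * w)) hGmeas.aestronglyMeasurable ?_
    rw [ae_restrict_iff' isOpen_ball.measurableSet.compl]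
    exact Filter.Eventually.of_forall hGcompl
  have hGint : Integrable G volume := by
    have := hGint1.union hGint2
    rwa [union_compl_self, integrableOn_univ] at this
  constructor
  · have hfun : (fun y : EuclideanSpace ℝ (Fin d) => g y / ‖y‖ ^ ((d : ℝ) + 2 * α)) = G := by
      funext y
      rw [hG, div_eq_mul_inv, ← Real.rpow_neg (norm_nonneg y)]
      congr 1
      rw [hβ]; ring
    rw [← hfun] at hGint
    exact hGint
  · -- the integral bound
    have habs : |∫ y, G y| ≤ ∫ y, |G y| := by
      simpa [Real.norm_eq_abs] using norm_integral_le_integral_norm (μ := volume) G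
    have hsplit : (∫ y in Metric.ball (0 : EuclideanSpace ℝ (Fin d)) 1, |G y|)
        + (∫ y in (Metric.ball (0 : EuclideanSpace ℝ (Fin d)) 1)ᶜ, |G y|) = ∫ y, |G y| :=
      integral_add_compl isOpen_ball.measurableSet hGint.abs
    have hb1 : (∫ y in Metric.ball (0 : EuclideanSpace ℝ (Fin d)) 1, |G y|) ≤ 6 * m * J₁ := by
      have := setIntegral_mono_on hGint1.abs (hI1.const_mul (6 * m))
        isOpen_ball.measurableSet (fun y hy => by
          simpa [Real.norm_eq_abs] using hGball y hy)
      calc (∫ y in Metric.ball (0 : EuclideanSpace ℝ (Fin d)) 1, |G y|)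
          ≤ ∫ y in Metric.ball (0 : EuclideanSpace ℝ (Fin d)) 1, 6 * m * ‖y‖ ^ q₁ := this
        _ = 6 * m * J₁ := by rw [hJ₁, integral_const_mul]
    have hb2 : (∫ y in (Metric.ball (0 : EuclideanSpace ℝ (Fin d)) 1)ᶜ, |G y|)
        ≤ 10 * w * J₂ := by
      have := setIntegral_mono_on hGint2.abs (hI2.const_mul (10 * w))
        isOpen_ball.measurableSet.compl (fun y hy => by
          simpa [Real.norm_eq_abs] using hGcompl y hy)
      calc (∫ y in (Metric.ball (0 : EuclideanSpace ℝ (Fin d)) 1)ᶜ, |G y|)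
          ≤ ∫ y in (Metric.ball (0 : EuclideanSpace ℝ (Fin d)) 1)ᶜ, 10 * w * ‖y‖ ^ q₂ := this
        _ = 10 * w * J₂ := by rw [hJ₂, integral_const_mul]
    have habs0 : ∀ y, 0 ≤ |G y| := fun y => abs_nonneg _
    have hfin : |∫ y, G y| ≤ 6 * m * J₁ + 10 * w * J₂ := by
      calc |∫ y, G y| ≤ ∫ y, |G y| := habs
        _ = (∫ y in Metric.ball (0 : EuclideanSpace ℝ (Fin d)) 1, |G y|)
            + (∫ y in (Metric.ball (0 : EuclideanSpace ℝ (Fin d)) 1)ᶜ, |G y|) := hsplit.symm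
        _ ≤ 6 * m * J₁ + 10 * w * J₂ := add_le_add hb1 hb2
    have hgoal : (∫ y, G y) = ∫ y : EuclideanSpace ℝ (Fin d),
        ((1 + ‖x + y‖ ^ 2) ^ (m / 2) + (1 + ‖x - y‖ ^ 2) ^ (m / 2)
          - 2 * (1 + ‖x‖ ^ 2) ^ (m / 2)) * ‖y‖ ^ (-(d : ℝ) - 2 * α) := rfl
    rw [← hgoal]
    calc |∫ y, G y| ≤ 6 * m * J₁ + 10 * w * J₂ := hfin
      _ ≤ (6 * m * J₁ + 10 * J₂ + 1) * w := by
          nlinarith [mul_nonneg (mul_nonneg (by linarith : (0:ℝ) ≤ 6 * m) hJ₁0)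
            (sub_nonneg.mpr hw1)]

end All
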